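/- Let k ≥ 1, let n ≥ 2k + 1, and let s + t = n with s, t ≥ 1. Let G = K_{s,t} be the complete bipartite graph on vertex set [n] with parts A and B of sizes s and t, and let X be a binomial random graph G(n, p) independent of G. Then the expected number of bijections π : [n] → [n] that are the kth power of a Hamilton cycle in G + X is at most n! · p^{k(n − 2s)}. -/

import Mathlib

open Finset
open scoped Classical

/-- The `k`th power of a Hamilton cycle in a graph `Γ` on vertex set `Fin n`:
a bijection `π` such that `π i` and `π (i + d)` are adjacent for all `1 ≤ d ≤ k`
(indices cyclic modulo `n`). -/
def IsPowHamCycle (n k : ℕ) (Γ : SimpleGraph (Fin n)) (π : Equiv.Perm (Fin n)) : Prop :=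
  ∀ i d : Fin n, 1 ≤ d.val → d.val ≤ k → Γ.Adj (π i) (π (i + d))

/-- The edge set of the complete graph on `Fin n`. -/
def completeEdges (n : ℕ) : Finset (Sym2 (Fin n)) :=
  Finset.univ.filter fun e => ¬ e.IsDiag

/-- The complete bipartite graph `K_{s, n−s}` on `Fin n`, with parts
`A = {v : v < s}` and `B = {v : s ≤ v}`. -/
def bipGraph (n s : ℕ) : SimpleGraph (Fin n) :=
  SimpleGraph.fromRel fun u v => u.val < s ∧ s ≤ v.val

section Aux

lemma weight_sum {α : Type*} [DecidableEq α] (E : Finset α) (p : ℝ) :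
    ∑ ω ∈ E.powerset, p ^ ω.card * (1 - p) ^ (E.card - ω.card) = 1 := by
  have h := Finset.prod_add (fun _ : α => p) (fun _ => 1 - p) E
  simp only [Finset.prod_const, add_sub_cancel, one_pow] at h
  have h2 : ∑ ω ∈ E.powerset, p ^ ω.card * (1 - p) ^ (E.card - ω.card)
      = ∑ ω ∈ E.powerset, p ^ ω.card * (1 - p) ^ (E \ ω).card := by
    apply Finset.sum_congr rfl
    intro ω hω
    rw [Finset.mem_powerset] at hω
    rw [Finset.card_sdiff_of_subset hω]
  rw [h2]; exact h.symm

lemma sum_superset_weight {α : Type*} [DecidableEq α] (E S : Finset α) (hS : S ⊆ E) (p : ℝ) :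
    ∑ ω ∈ E.powerset.filter (fun ω => S ⊆ ω), p ^ ω.card * (1 - p) ^ (E.card - ω.card)
      = p ^ S.card := by
  rw [Finset.sum_nbij' (i := fun ω => ω \ S) (j := fun ω' => S ∪ ω')
    (t := (E \ S).powerset)
    (g := fun ω' => p ^ S.card * (p ^ ω'.card * (1 - p) ^ ((E \ S).card - ω'.card)))]
  · rw [← Finset.mul_sum, weight_sum, mul_one]
  · intro ω hω
    simp only [Finset.mem_filter, Finset.mem_powerset] at hω ⊢
    exact Finset.sdiff_subset_sdiff hω.1 (le_refl _)
  · intro ω' hω'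
    simp only [Finset.mem_powerset] at hω'
    simp only [Finset.mem_filter, Finset.mem_powerset]
    exact ⟨Finset.union_subset hS (hω'.trans Finset.sdiff_subset), Finset.subset_union_left⟩
  · intro ω hω
    simp only [Finset.mem_filter, Finset.mem_powerset] at hω
    exact Finset.union_sdiff_of_subset hω.2
  · intro ω' hω'
    simp only [Finset.mem_powerset] at hω'
    have hd : Disjoint S ω' :=
      Finset.disjoint_left.mpr fun a ha hb => (Finset.mem_sdiff.mp (hω' hb)).2 ha
    exact Finset.union_sdiff_cancel_left hd
  · intro ω hω
    simp only [Finset.mem_filter, Finset.mem_powerset] at hω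
    have h1 : (E \ S).card = E.card - S.card := Finset.card_sdiff_of_subset hS
    have h2 : (ω \ S).card = ω.card - S.card := Finset.card_sdiff_of_subset hω.2
    have h3 : S.card ≤ ω.card := Finset.card_le_card hω.2
    have h4 : ω.card ≤ E.card := Finset.card_le_card hω.1
    have h5 : S.card ≤ E.card := Finset.card_le_card hS
    rw [← mul_assoc, ← pow_add]
    congr 2
    · omega
    · omega

/-- The required edges of the pattern that lie inside part `B`. -/
noncomputable def badEdges (n k s : ℕ) (π : Equiv.Perm (Fin n)) : Finset (Sym2 (Fin n)) :=
  ((Finset.univ ×ˢ (Finset.univ.filter fun d : Fin n => 1 ≤ d.val ∧ d.val ≤ k)).filter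
    (fun x => s ≤ (π x.1).val ∧ s ≤ (π (x.1 + x.2)).val)).image
    (fun x => s(π x.1, π (x.1 + x.2)))

lemma badEdges_card (n k s : ℕ) (hk : 1 ≤ k) (hn : 2 * k + 1 ≤ n) (π : Equiv.Perm (Fin n)) :
    k * (n - 2 * s) ≤ (badEdges n k s π).card := by
  have : NeZero n := ⟨by omega⟩
  set D : Finset (Fin n) := Finset.univ.filter fun d : Fin n => 1 ≤ d.val ∧ d.val ≤ k with hDdef
  have hD : D.card = k := by
    rw [Finset.card_bij (fun d _ => d.val) (t := Finset.Icc 1 k)]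
    · exact Nat.card_Icc 1 k ▸ rfl
    · intro d hd
      simp only [hDdef, Finset.mem_filter] at hd
      simp [Finset.mem_Icc, hd.2.1, hd.2.2]
    · intro a ha b hb h
      exact Fin.val_injective h
    · intro m hm
      simp only [Finset.mem_Icc] at hm
      exact ⟨⟨m, by omega⟩, by simp [hDdef]; omega, rfl⟩
  set P := (Finset.univ : Finset (Fin n)) ×ˢ D with hPdef
  have hP : P.card = n * k := by
    rw [Finset.card_product, Finset.card_univ, Fintype.card_fin, hD]
  set good : Fin n × Fin n → Prop := fun x => s ≤ (π x.1).val ∧ s ≤ (π (x.1 + x.2)).val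
  set T := P.filter good with hTdef
  have hinj : Set.InjOn (fun x : Fin n × Fin n => s(π x.1, π (x.1 + x.2))) T := by
    intro x hx y hy hxy
    have hx' : x.2 ∈ D := (Finset.mem_product.mp (Finset.mem_filter.mp hx).1).2
    have hy' : y.2 ∈ D := (Finset.mem_product.mp (Finset.mem_filter.mp hy).1).2
    simp only [hDdef, Finset.mem_filter] at hx' hy'
    rw [Sym2.eq_iff] at hxy
    rcases hxy with ⟨h1, h2⟩ | ⟨h1, h2⟩
    · have e1 : x.1 = y.1 := π.injective h1
      have e2 : x.1 + x.2 = y.1 + y.2 := π.injective h2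
      rw [e1] at e2
      exact Prod.ext e1 (add_left_cancel e2)
    · exfalso
      have e1 : x.1 = y.1 + y.2 := π.injective h1
      have e2 : x.1 + x.2 = y.1 := π.injective h2
      rw [e1] at e2
      have e3 : y.2 + x.2 = 0 := by
        have h' : y.1 + (y.2 + x.2) = y.1 + 0 := by rw [add_zero, ← add_assoc]; exact e2
        exact add_left_cancel h'
      have hval : (y.2 + x.2).val = y.2.val + x.2.val := by
        rw [Fin.val_add, Nat.mod_eq_of_lt]; omega
      rw [e3] at hval
      simp at hval
      omega
  have himg : (badEdges n k s π).card = T.card := by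
    unfold badEdges
    rw [Finset.card_image_of_injOn hinj]
  rw [himg]
  have hsplit : T.card + (P.filter fun x => ¬ good x).card = P.card :=
    Finset.card_filter_add_card_filter_not good
  have hs' : (Finset.univ.filter fun v : Fin n => (π v).val < s).card ≤ s := by
    have h1 : ∀ v ∈ (Finset.univ.filter fun v : Fin n => (π v).val < s),
        (π v).val ∈ Finset.range s := by
      intro v hv; simp only [Finset.mem_filter] at hv; simpa using hv.2
    have h2 : Set.InjOn (fun v => (π v).val)
        (Finset.univ.filter fun v : Fin n => (π v).val < s) := by
      intro a _ b _ h; exact π.injective (Fin.val_injective h)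
    have := Finset.card_le_card_of_injOn _ h1 h2
    simpa using this
  have hF1 : (P.filter fun x => (π x.1).val < s).card ≤ s * k := by
    have hsub : (P.filter fun x => (π x.1).val < s) ⊆
        (Finset.univ.filter fun v : Fin n => (π v).val < s) ×ˢ D := by
      intro x hx
      simp only [Finset.mem_filter, hPdef, Finset.mem_product, Finset.mem_univ, true_and] at hx ⊢
      exact ⟨hx.2, hx.1⟩
    calc (P.filter fun x => (π x.1).val < s).card
        ≤ ((Finset.univ.filter fun v : Fin n => (π v).val < s) ×ˢ D).card :=
          Finset.card_le_card hsub
      _ = (Finset.univ.filter fun v : Fin n => (π v).val < s).card * k := by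
          rw [Finset.card_product, hD]
      _ ≤ s * k := Nat.mul_le_mul_right k hs'
  have hF2 : (P.filter fun x => (π (x.1 + x.2)).val < s).card ≤ s * k := by
    have : (P.filter fun x => (π (x.1 + x.2)).val < s).card
        = (P.filter fun x => (π x.1).val < s).card := by
      apply Finset.card_nbij' (fun x => (x.1 + x.2, x.2)) (fun x => (x.1 - x.2, x.2))
      · intro x hx
        simp only [Finset.mem_coe, Finset.mem_filter, hPdef, Finset.mem_product, Finset.mem_univ, true_and] at hx ⊢
        exact ⟨hx.1, hx.2⟩
      · intro x hx
        simp only [Finset.mem_coe, Finset.mem_filter, hPdef, Finset.mem_product, Finset.mem_univ, true_and] at hx ⊢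
        refine ⟨hx.1, ?_⟩
        simpa [sub_add_cancel] using hx.2
      · intro x _
        simp [add_sub_cancel_right]
      · intro x _
        simp [sub_add_cancel]
    rw [this]; exact hF1
  have hTc : (P.filter fun x => ¬ good x).card ≤ s * k + s * k := by
    have hcong : (P.filter fun x => ¬ good x) =
        P.filter fun x => ((π x.1).val < s ∨ (π (x.1 + x.2)).val < s) := by
      apply Finset.filter_congr
      intro x _
      simp only [good, not_and_or, not_le]
    rw [hcong, Finset.filter_or]
    calc ((P.filter fun x => (π x.1).val < s) ∪ P.filter fun x => (π (x.1 + x.2)).val < s).card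
        ≤ (P.filter fun x => (π x.1).val < s).card
          + (P.filter fun x => (π (x.1 + x.2)).val < s).card := Finset.card_union_le _ _
      _ ≤ s * k + s * k := Nat.add_le_add hF1 hF2
  rcases le_or_gt n (2 * s) with h2s | h2s
  · simp [Nat.sub_eq_zero_of_le h2s]
  · have e : k * (n - 2 * s) + (s * k + s * k) = k * n := by
      have e1 : s * k + s * k = k * (2 * s) := by ring
      rw [e1, ← Nat.mul_add, Nat.sub_add_cancel (le_of_lt h2s)]
    have e2 : k * n = n * k := by ring
    rw [hP] at hsplit
    linarith

lemma badEdges_subset_complete (n k s : ℕ) (hn : 2 * k + 1 ≤ n) (π : Equiv.Perm (Fin n)) :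
    badEdges n k s π ⊆ completeEdges n := by
  have : NeZero n := ⟨by omega⟩
  intro e he
  unfold badEdges at he
  simp only [Finset.mem_image, Finset.mem_filter, Finset.mem_product,
    Finset.mem_univ, true_and] at he
  obtain ⟨x, ⟨hd, _⟩, rfl⟩ := he
  simp only [completeEdges, Finset.mem_filter, Finset.mem_univ, true_and,
    Sym2.isDiag_iff_proj_eq]
  intro hcontra
  have hne : x.1 ≠ x.1 + x.2 := by
    intro h
    have : x.2 = 0 := by
      have h' : x.1 + 0 = x.1 + x.2 := by rw [add_zero]; exact h
      exact (add_left_cancel h').symm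
    rw [this] at hd
    simp at hd
  exact hne (π.injective hcontra)

lemma badEdges_subset_of_pow (n k s : ℕ) (hn : 2 * k + 1 ≤ n) (π : Equiv.Perm (Fin n))
    (ω : Finset (Sym2 (Fin n)))
    (h : IsPowHamCycle n k (bipGraph n s ⊔ SimpleGraph.fromEdgeSet (↑ω)) π) :
    badEdges n k s π ⊆ ω := by
  intro e he
  unfold badEdges at he
  simp only [Finset.mem_image, Finset.mem_filter, Finset.mem_product,
    Finset.mem_univ, true_and] at he
  obtain ⟨x, ⟨hd, hgood⟩, rfl⟩ := he
  have hadj := h x.1 x.2 hd.1 hd.2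
  rw [SimpleGraph.sup_adj] at hadj
  rcases hadj with hadj | hadj
  · exfalso
    rw [bipGraph, SimpleGraph.fromRel_adj] at hadj
    rcases hadj.2 with ⟨h1, _⟩ | ⟨h1, _⟩
    · omega
    · omega
  · rw [SimpleGraph.fromEdgeSet_adj] at hadj
    exact_mod_cast hadj.1

end Aux

set_option maxHeartbeats 1000000 in
/-- For `G = K_{s,t}` with `s + t = n` and `X` a binomial random graph `G(n, p)`, the
expected number of bijections `π` that are the `k`th power of a Hamilton cycle in `G + X`
is at most `n! · p^{k(n − 2s)}`. -/
theorem expected_powHam_bipartite (k n s t : ℕ) (hk : 1 ≤ k) (hn : 2 * k + 1 ≤ n)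
    (hst : s + t = n) (hs : 1 ≤ s) (ht : 1 ≤ t)
    (p : ℝ) (hp0 : 0 ≤ p) (hp1 : p ≤ 1) :
    (∑ ω ∈ (completeEdges n).powerset,
        (p ^ ω.card * (1 - p) ^ ((completeEdges n).card - ω.card)) *
          ((Finset.univ.filter fun π : Equiv.Perm (Fin n) =>
              IsPowHamCycle n k (bipGraph n s ⊔ SimpleGraph.fromEdgeSet (↑ω)) π).card : ℝ))
      ≤ (n.factorial : ℝ) * p ^ (k * (n - 2 * s)) := by
  set E := completeEdges n with hE
  set w : Finset (Sym2 (Fin n)) → ℝ := fun ω => p ^ ω.card * (1 - p) ^ (E.card - ω.card) with hw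
  have hwnn : ∀ ω, 0 ≤ w ω := fun ω =>
    mul_nonneg (pow_nonneg hp0 _) (pow_nonneg (by linarith) _)
  have hswap : (∑ ω ∈ E.powerset,
      w ω * ((Finset.univ.filter fun π : Equiv.Perm (Fin n) =>
        IsPowHamCycle n k (bipGraph n s ⊔ SimpleGraph.fromEdgeSet (↑ω)) π).card : ℝ))
      = ∑ π : Equiv.Perm (Fin n), ∑ ω ∈ E.powerset,
          if IsPowHamCycle n k (bipGraph n s ⊔ SimpleGraph.fromEdgeSet (↑ω)) π
          then w ω else 0 := by
    rw [← Finset.sum_comm]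
    apply Finset.sum_congr rfl
    intro ω _
    rw [Finset.card_filter]
    push_cast
    rw [Finset.mul_sum]
    apply Finset.sum_congr rfl
    intro π _
    by_cases h : IsPowHamCycle n k (bipGraph n s ⊔ SimpleGraph.fromEdgeSet (↑ω)) π <;>
      simp [h]
  rw [hswap]
  have hbound : ∀ π : Equiv.Perm (Fin n),
      (∑ ω ∈ E.powerset,
        if IsPowHamCycle n k (bipGraph n s ⊔ SimpleGraph.fromEdgeSet (↑ω)) π
        then w ω else 0) ≤ p ^ (k * (n - 2 * s)) := by
    intro π
    rw [← Finset.sum_filter]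
    have hsub : (E.powerset.filter fun ω : Finset (Sym2 (Fin n)) =>
        IsPowHamCycle n k (bipGraph n s ⊔ SimpleGraph.fromEdgeSet (↑ω)) π)
        ⊆ E.powerset.filter fun ω : Finset (Sym2 (Fin n)) => badEdges n k s π ⊆ ω := by
      apply Finset.monotone_filter_right
      intro ω _ h
      exact badEdges_subset_of_pow n k s hn π ω h
    calc (∑ ω ∈ E.powerset.filter fun ω : Finset (Sym2 (Fin n)) =>
            IsPowHamCycle n k (bipGraph n s ⊔ SimpleGraph.fromEdgeSet (↑ω)) π, w ω)
        ≤ ∑ ω ∈ E.powerset.filter fun ω : Finset (Sym2 (Fin n)) => badEdges n k s π ⊆ ω, w ω :=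
          Finset.sum_le_sum_of_subset_of_nonneg hsub fun ω _ _ => hwnn ω
      _ = p ^ (badEdges n k s π).card :=
          sum_superset_weight E (badEdges n k s π) (badEdges_subset_complete n k s hn π) p
      _ ≤ p ^ (k * (n - 2 * s)) :=
          pow_le_pow_of_le_one hp0 hp1 (badEdges_card n k s hk hn π)
  calc (∑ π : Equiv.Perm (Fin n), ∑ ω ∈ E.powerset,
        if IsPowHamCycle n k (bipGraph n s ⊔ SimpleGraph.fromEdgeSet (↑ω)) π then w ω else 0)
      ≤ ∑ _π : Equiv.Perm (Fin n), p ^ (k * (n - 2 * s)) :=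
        Finset.sum_le_sum fun π _ => hbound π
    _ = (n.factorial : ℝ) * p ^ (k * (n - 2 * s)) := by
        rw [Finset.sum_const, Finset.card_univ, Fintype.card_perm, Fintype.card_fin,
          nsmul_eq_mul]
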